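/- For every fixed real number y, the difference h(x+y) − h(x) tends to 0 as x → ∞ (where h is evaluated only at nonnegative arguments, i.e., for x large enough that x and x+y are nonnegative). -/

import Mathlib

lemma fib_le_pow_17 : ∀ m : ℕ, (Nat.fib m : ℝ) ≤ 1.7 ^ m := by
  have key : ∀ m : ℕ, (Nat.fib m : ℝ) ≤ 1.7 ^ m ∧ (Nat.fib (m+1) : ℝ) ≤ 1.7 ^ (m+1) := by
    intro m
    induction m with
    | zero => norm_num
    | succ k ih =>
      refine ⟨ih.2, ?_⟩
      have hfib : (Nat.fib (k+2) : ℝ) = (Nat.fib k : ℝ) + (Nat.fib (k+1) : ℝ) := by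
        rw [Nat.fib_add_two]; push_cast; ring
      have hp : (0:ℝ) ≤ 1.7 ^ k := by positivity
      have e1 : (1.7:ℝ)^(k+1) = 1.7^k * 1.7 := pow_succ _ _
      have e2 : (1.7:ℝ)^(k+1+1) = 1.7^k * 1.7 * 1.7 := by rw [pow_succ, pow_succ]
      rw [hfib, e2]
      nlinarith [ih.1, ih.2, e1]
  exact fun m => (key m).1

/-- For every fixed real `y`, `h(x+y) - h(x) → 0` as `x → ∞`. -/
theorem tendsto_h_shift
    (M : ℕ → ℝ) (hM : ∀ n : ℕ, M n = (2 ^ n - (-1) ^ n) / 3)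
    (h : ℝ → ℝ)
    (h01 : ∀ x ∈ Set.Icc (0 : ℝ) 1, h x = x)
    (hlin : ∀ n : ℕ, 2 ≤ n → ∀ x ∈ Set.Icc (M n) (M (n + 1)),
      h x = (Nat.fib n : ℝ) +
        ((Nat.fib (n + 1) : ℝ) - (Nat.fib n : ℝ)) * (x - M n) / (M (n + 1) - M n)) :
    ∀ y : ℝ,
      Filter.Tendsto (fun x : ℝ => h (x + y) - h x) Filter.atTop (nhds 0) := by
  intro y
  -- difference of consecutive M's
  have habs : ∀ n : ℕ, (-1:ℝ) ≤ (-1:ℝ)^n ∧ (-1:ℝ)^n ≤ 1 := by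
    intro n
    rcases Nat.even_or_odd n with he | ho
    · rw [he.neg_one_pow]; norm_num
    · rw [ho.neg_one_pow]; norm_num
  have hdge : ∀ n : ℕ, 2 ≤ n → (2:ℝ)^n/6 ≤ M (n+1) - M n := by
    intro n hn
    rw [hM, hM]
    have h4 : (4:ℝ) ≤ 2^n := by
      calc (4:ℝ) = 2^2 := by norm_num
      _ ≤ 2^n := by
        apply pow_le_pow_right₀ (by norm_num) hn
    have h1 := habs n
    have h2 := habs (n+1)
    rw [pow_succ, pow_succ]
    nlinarith
  have hdpos : ∀ n : ℕ, 2 ≤ n → 0 < M (n+1) - M n := by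
    intro n hn
    have := hdge n hn
    have : (0:ℝ) < 2^n/6 := by positivity
    linarith [hdge n hn]
  have hMlow : ∀ n : ℕ, (n:ℝ)/3 ≤ M n := by
    intro n
    rw [hM]
    have h1 : (n:ℝ) + 1 ≤ 2^n := by
      exact_mod_cast Nat.succ_le_of_lt Nat.lt_two_pow_self
    have h2 := habs n
    linarith [h2.1, h2.2]
  -- difference of h within one segment
  have seg : ∀ n : ℕ, 2 ≤ n → ∀ a b : ℝ, M n ≤ a → a ≤ b → b ≤ M (n+1) →
      h b - h a = ((Nat.fib (n+1) : ℝ) - (Nat.fib n : ℝ)) * (b - a) / (M (n+1) - M n) := by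
    intro n hn a b ha hab hb
    rw [hlin n hn a ⟨ha, le_trans hab hb⟩, hlin n hn b ⟨le_trans ha hab, hb⟩]
    ring
  -- slope bound
  have slope_le : ∀ N k : ℕ, 2 ≤ N → N ≤ k →
      ((Nat.fib (k+1) : ℝ) - (Nat.fib k : ℝ)) ≤ (11 * 0.85^N) * (M (k+1) - M k) := by
    intro N k hN hk
    have hk2 : 2 ≤ k := le_trans hN hk
    have hd := hdge k hk2
    have hf : (Nat.fib (k+1) : ℝ) ≤ 1.7^(k+1) := fib_le_pow_17 _
    have hf0 : (0:ℝ) ≤ (Nat.fib k : ℝ) := Nat.cast_nonneg _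
    have hmul : (0.85:ℝ)^k * 2^k = 1.7^k := by
      rw [← mul_pow]; norm_num
    have h85 : (0.85:ℝ)^k ≤ 0.85^N :=
      pow_le_pow_of_le_one (by norm_num) (by norm_num) hk
    have h85pos : (0:ℝ) < 0.85^k := by positivity
    have h2pos : (0:ℝ) < 2^k := by positivity
    have hLd : (1.7:ℝ) * 1.7^k ≤ (11 * 0.85^N) * (2^k/6) := by
      rw [← hmul]
      nlinarith
    calc ((Nat.fib (k+1) : ℝ) - (Nat.fib k : ℝ)) ≤ 1.7^(k+1) := by linarith
    _ = 1.7 * 1.7^k := by rw [pow_succ]; ring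
    _ ≤ (11 * 0.85^N) * (2^k/6) := hLd
    _ ≤ (11 * 0.85^N) * (M (k+1) - M k) := by
        apply mul_le_mul_of_nonneg_left hd (by positivity)
  -- bound of h-increment within one segment
  have segbound : ∀ N : ℕ, 2 ≤ N → ∀ k : ℕ, N ≤ k → ∀ a b : ℝ, M k ≤ a → a ≤ b → b ≤ M (k+1) →
      0 ≤ h b - h a ∧ h b - h a ≤ (11 * 0.85^N) * (b - a) := by
    intro N hN k hk a b ha hab hb
    have hk2 : 2 ≤ k := le_trans hN hk
    have hd := hdpos k hk2
    have hΔ : (0:ℝ) ≤ (Nat.fib (k+1) : ℝ) - (Nat.fib k : ℝ) := by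
      have : Nat.fib k ≤ Nat.fib (k+1) := Nat.fib_le_fib_succ
      have := Nat.cast_le (α := ℝ).mpr this
      linarith
    rw [seg k hk2 a b ha hab hb]
    constructor
    · apply div_nonneg (mul_nonneg hΔ (by linarith)) hd.le
    · rw [div_le_iff₀ hd]
      have hsl := slope_le N k hN hk
      nlinarith
  -- chain lemma
  have chain : ∀ N : ℕ, 2 ≤ N → ∀ n : ℕ, ∀ a b : ℝ, M N ≤ a → a ≤ b → b ≤ M (N + n + 1) →
      0 ≤ h b - h a ∧ h b - h a ≤ (11 * 0.85^N) * (b - a) := by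
    intro N hN n
    induction n with
    | zero =>
      intro a b ha hab hb
      exact segbound N hN N le_rfl a b ha hab (by simpa using hb)
    | succ k ih =>
      intro a b ha hab hb
      have hb' : b ≤ M ((N + k + 1) + 1) := by
        have : N + (k+1) + 1 = (N + k + 1) + 1 := by ring
        rwa [this] at hb
      by_cases hbk : b ≤ M (N + k + 1)
      · exact ih a b ha hab hbk
      · push_neg at hbk
        by_cases hak : M (N + k + 1) ≤ a
        · exact segbound N hN (N+k+1) (by omega) a b hak hab hb'
        · push_neg at hak
          have h1 := ih a (M (N + k + 1)) ha hak.le le_rfl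
          have h2 := segbound N hN (N+k+1) (by omega) (M (N + k + 1)) b le_rfl hbk.le hb'
          constructor
          · linarith [h1.1, h2.1]
          · have := h1.2
            have := h2.2
            nlinarith [h1.2, h2.2]
  -- main argument
  rw [Metric.tendsto_atTop]
  intro ε hε
  have htend : Filter.Tendsto (fun n : ℕ => (0.85:ℝ)^n) Filter.atTop (nhds 0) :=
    tendsto_pow_atTop_nhds_zero_of_lt_one (by norm_num) (by norm_num)
  have hδpos : (0:ℝ) < ε / (11 * (|y| + 1)) := by positivity
  obtain ⟨N₀, hN₀⟩ := (htend.eventually (gt_mem_nhds hδpos)).exists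
  set N := max N₀ 2 with hNdef
  have hN2 : 2 ≤ N := le_max_right _ _
  have h85 : (0.85:ℝ)^N ≤ 0.85^N₀ :=
    pow_le_pow_of_le_one (by norm_num) (by norm_num) (le_max_left _ _)
  set L := (11:ℝ) * 0.85^N with hLdef
  have hLpos : 0 < L := by positivity
  have hLsmall : L * (|y| + 1) < ε := by
    have hyp : (0:ℝ) < |y| + 1 := by positivity
    have : (0.85:ℝ)^N < ε / (11 * (|y| + 1)) := lt_of_le_of_lt h85 hN₀
    rw [lt_div_iff₀ (by positivity)] at this
    calc L * (|y| + 1) = 0.85^N * (11 * (|y|+1)) := by rw [hLdef]; ring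
    _ < ε := this
  refine ⟨M N + |y| + 1, fun x hx => ?_⟩
  have hyabs := abs_nonneg y
  have hyneg := neg_abs_le y
  have hyle := le_abs_self y
  have hx1 : M N ≤ x := by linarith
  have hxy : M N ≤ x + y := by linarith
  -- coverage
  obtain ⟨n, hn⟩ : ∃ n : ℕ, x + |y| ≤ M (N + n + 1) := by
    obtain ⟨n, hn⟩ := exists_nat_ge (3 * (x + |y|))
    refine ⟨n, ?_⟩
    have hlow := hMlow (N + n + 1)
    have : (n:ℝ) ≤ ((N + n + 1 : ℕ) : ℝ) := by
      push_cast
      linarith [Nat.cast_nonneg (α := ℝ) N]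
    nlinarith [this]
  rw [Real.dist_eq, sub_zero]
  rcases le_total x (x + y) with hc | hc
  · have hc2 : x + y ≤ M (N + n + 1) := by linarith
    have hch := chain N hN2 n x (x + y) hx1 hc hc2
    rw [abs_of_nonneg hch.1]
    have : L * (x + y - x) ≤ L * |y| := by
      apply mul_le_mul_of_nonneg_left (by linarith) hLpos.le
    calc h (x + y) - h x ≤ L * (x + y - x) := hch.2
    _ ≤ L * |y| := this
    _ < ε := by nlinarith
  · have hc2 : x ≤ M (N + n + 1) := by linarith
    have hch := chain N hN2 n (x + y) x hxy hc hc2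
    rw [abs_sub_comm, abs_of_nonneg hch.1]
    have : L * (x - (x + y)) ≤ L * |y| := by
      apply mul_le_mul_of_nonneg_left (by linarith) hLpos.le
    calc h x - h (x + y) ≤ L * (x - (x + y)) := hch.2
    _ ≤ L * |y| := this
    _ < ε := by nlinarith
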